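/- Let H be a digraph admitting a k-min-ordering for some k > 1: its vertices are partitioned into V_0,...,V_{k-1} with all arcs going from V_i to V_{i+1} (mod k), and a linear order < is a min-ordering on each consecutive pair of parts. Let D be a weakly connected digraph with arc-consistent nonempty lists L(x) ⊆ V(H), and suppose D admits a homomorphism to the directed k-cycle with parts D_0,...,D_{k-1} such that for some fixed shift ℓ, L(x) ∩ V_{j+ℓ} ≠ ∅ for every x ∈ D_j. Then the map f sending each x ∈ D_j to the minimum element (under <) of L(x) ∩ V_{j+ℓ} is a list homomorphism from D to H. -/
import Mathlib


/-- Let `H` admit a `k`-min-ordering (`k > 1`), i.e. a homomorphism `πH` to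
the directed `k`-cycle and a linear order that is a min-ordering on each consecutive pair
of parts. Let `D` be weakly connected with arc-consistent lists and a homomorphism `πD`
to the `k`-cycle, and suppose for a fixed shift `ℓ` each list meets the part
`V_{πD(x)+ℓ}`. Then sending each `x` to the minimum element of `L(x) ∩ V_{πD(x)+ℓ}` is a
list homomorphism from `D` to `H`. -/
theorem stmt_6 {k : ℕ} (hk : 1 < k) {V U : Type*} [LinearOrder V]
    (A : V → V → Prop) (πH : V → ZMod k)
    (harcH : ∀ a b, A a b → πH b = πH a + 1)
    (hmin : ∀ u u' v v', A u v → A u' v' → πH u = πH u' → u < u' → v' < v → A u v')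
    (AD : U → U → Prop)
    (hconn : ∀ x y : U, Relation.ReflTransGen (fun a b => AD a b ∨ AD b a) x y)
    (πD : U → ZMod k) (harcD : ∀ x y, AD x y → πD y = πD x + 1)
    (L : U → Finset V)
    (hac1 : ∀ x y, AD x y → ∀ a ∈ L x, ∃ b ∈ L y, A a b)
    (hac2 : ∀ x y, AD x y → ∀ b ∈ L y, ∃ a ∈ L x, A a b)
    (hneL : ∀ x, (L x).Nonempty)
    (ℓ : ZMod k)
    (hne : ∀ x, ((L x).filter (fun a => πH a = πD x + ℓ)).Nonempty) :
    let f : U → V := fun x => ((L x).filter (fun a => πH a = πD x + ℓ)).min' (hne x)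
    (∀ x, f x ∈ L x) ∧ (∀ x y, AD x y → A (f x) (f y)) := by
  intro f
  have hfmem : ∀ x, f x ∈ (L x).filter (fun a => πH a = πD x + ℓ) := fun x =>
    Finset.min'_mem _ (hne x)
  have hfL : ∀ x, f x ∈ L x := fun x => (Finset.mem_filter.mp (hfmem x)).1
  have hfπ : ∀ x, πH (f x) = πD x + ℓ := fun x => (Finset.mem_filter.mp (hfmem x)).2
  refine ⟨hfL, fun x y hxy => ?_⟩
  obtain ⟨b, hbL, hab⟩ := hac1 x y hxy (f x) (hfL x)
  obtain ⟨a, haL, hba⟩ := hac2 x y hxy (f y) (hfL y)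
  have hbπ : πH b = πD y + ℓ := by
    rw [harcH _ _ hab, hfπ x, harcD x y hxy]; ring
  have haπ : πH a = πD x + ℓ := by
    have h1 := harcH _ _ hba
    have h2 := hfπ y
    have h3 := harcD x y hxy
    rw [h2, h3] at h1
    have : πH a + 1 = (πD x + ℓ) + 1 := by rw [← h1]; ring
    exact add_right_cancel this
  have hfxa : f x ≤ a := Finset.min'_le _ _ (Finset.mem_filter.mpr ⟨haL, haπ⟩)
  have hfyb : f y ≤ b := Finset.min'_le _ _ (Finset.mem_filter.mpr ⟨hbL, hbπ⟩)
  rcases eq_or_lt_of_le hfxa with h | h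
  · rw [h]; exact hba
  · rcases eq_or_lt_of_le hfyb with h' | h'
    · rw [h']; exact hab
    · exact hmin (f x) a b (f y) hab hba (by rw [hfπ x, haπ]) h h'
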